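/- If f : ℝ≥0 → ℝ≥0 is a nondecreasing function with 1 ≤ p ≤ q, and ∫₁^∞ (f(t)/t)^p dt/t < ∞, then ∫₁^∞ (f(t)/t)^q dt/t < ∞. -/

import Mathlib

open MeasureTheory Set

/-- Condition (C_p) is monotone in p: if `f` is nondecreasing nonnegative and
`∫₁^∞ (f t / t)^p dt/t < ∞`, then the same holds with exponent `q ≥ p`. -/
theorem stmt0 (f : ℝ → ℝ) (hf : Monotone f) (hf0 : ∀ t, 0 ≤ f t)
    (p q : ℝ) (hp : 1 ≤ p) (hpq : p ≤ q)
    (hCp : IntegrableOn (fun t => (f t / t) ^ p * (1 / t)) (Ici (1 : ℝ))) :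
    IntegrableOn (fun t => (f t / t) ^ q * (1 / t)) (Ici (1 : ℝ)) := by
  have hp0 : (0:ℝ) < p := lt_of_lt_of_le one_pos hp
  set I : ℝ := ∫ t in Ici (1:ℝ), (f t / t) ^ p * (1 / t) with hI
  have hInn : ∀ x ∈ Ici (1:ℝ), 0 ≤ (f x / x) ^ p * (1 / x) := by
    intro x hx
    have hx0 : (0:ℝ) < x := lt_of_lt_of_le one_pos hx
    have hfx : 0 ≤ f x / x := div_nonneg (hf0 x) hx0.le
    exact mul_nonneg (Real.rpow_nonneg hfx p) (one_div_nonneg.2 hx0.le)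
  have hI0 : 0 ≤ I := setIntegral_nonneg measurableSet_Ici hInn
  set C : ℝ := 2 * (2 * I) ^ (1/p) with hC
  have hC0 : 0 ≤ C := by positivity
  have hbound : ∀ t ∈ Ici (1:ℝ), f t / t ≤ C := by
    intro t ht
    have ht0 : (0:ℝ) < t := lt_of_lt_of_le one_pos ht
    have h2t0 : (0:ℝ) < 2 * t := by linarith
    have hsub : Icc t (2*t) ⊆ Ici (1:ℝ) := fun x hx => le_trans ht hx.1
    have hint : IntegrableOn (fun x => (f x / x) ^ p * (1 / x)) (Icc t (2*t)) :=
      hCp.mono_set hsub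
    have hft2 : 0 ≤ f t / (2*t) := div_nonneg (hf0 t) h2t0.le
    have hconst : ∀ x ∈ Icc t (2*t),
        (f t / (2*t)) ^ p * (1/(2*t)) ≤ (f x / x) ^ p * (1 / x) := by
      intro x hx
      have hx0 : 0 < x := lt_of_lt_of_le ht0 hx.1
      have h1 : f t / (2*t) ≤ f x / x := div_le_div₀ (hf0 x) (hf hx.1) hx0 hx.2
      exact mul_le_mul (Real.rpow_le_rpow hft2 h1 hp0.le)
        (one_div_le_one_div_of_le hx0 hx.2) (one_div_nonneg.2 h2t0.le)
        (Real.rpow_nonneg (div_nonneg (hf0 x) hx0.le) p)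
    have h2 : ∫ _x in Icc t (2*t), ((f t/(2*t))^p * (1/(2*t)))
        ≤ ∫ x in Icc t (2*t), (f x / x)^p * (1/x) :=
      setIntegral_mono_on (integrableOn_const measure_Icc_lt_top.ne) hint
        measurableSet_Icc hconst
    have h3 : ∫ x in Icc t (2*t), (f x / x)^p * (1/x) ≤ I :=
      setIntegral_mono_set hCp ((ae_restrict_iff' measurableSet_Ici).2 (ae_of_all _ hInn))
        (HasSubset.Subset.eventuallyLE hsub)
    rw [setIntegral_const, measureReal_def, Real.volume_Icc, ENNReal.toReal_ofReal (by linarith)] at h2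
    have h4 : (f t / (2*t)) ^ p ≤ 2 * I := by
      have : t * ((f t/(2*t))^p * (1/(2*t))) = (f t/(2*t))^p / 2 := by
        field_simp
      have h5 : (f t/(2*t))^p / 2 ≤ I := by
        calc (f t/(2*t))^p / 2 = (2*t - t) • ((f t/(2*t))^p * (1/(2*t))) := by
              rw [smul_eq_mul]; field_simp; ring
          _ ≤ _ := le_trans h2 h3
      linarith
    have h6 : f t / (2*t) ≤ (2*I) ^ (1/p) := by
      have h7 := Real.rpow_le_rpow (Real.rpow_nonneg hft2 p) h4
        (le_of_lt (by positivity : (0:ℝ) < 1/p))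
      rwa [← Real.rpow_mul hft2, mul_one_div_cancel hp0.ne', Real.rpow_one] at h7
    have h8 : f t / t = 2 * (f t / (2*t)) := by field_simp
    rw [h8, hC]
    linarith
  have hmeas : AEStronglyMeasurable (fun t => (f t / t) ^ q * (1 / t))
      (volume.restrict (Ici (1:ℝ))) := by
    apply Measurable.aestronglyMeasurable
    have hq0 : (0:ℝ) ≤ q := le_trans zero_le_one (le_trans hp hpq)
    exact ((Real.continuous_rpow_const hq0).measurable.comp
      (hf.measurable.div measurable_id)).mul (measurable_const.div measurable_id)
  refine Integrable.mono' (hCp.const_mul (C ^ (q - p))) hmeas ?_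
  rw [ae_restrict_iff' measurableSet_Ici]
  refine ae_of_all _ fun x hx => ?_
  have hx0 : (0:ℝ) < x := lt_of_lt_of_le one_pos hx
  have hfx : 0 ≤ f x / x := div_nonneg (hf0 x) hx0.le
  have hnn : 0 ≤ (f x / x) ^ q * (1 / x) :=
    mul_nonneg (Real.rpow_nonneg hfx q) (one_div_nonneg.2 hx0.le)
  rw [Real.norm_eq_abs, abs_of_nonneg hnn]
  have hsplit : (f x / x) ^ q = (f x / x) ^ p * (f x / x) ^ (q - p) := by
    have h9 : p + (q - p) ≠ 0 := ne_of_gt (by linarith)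
    have := Real.rpow_add' hfx h9
    rwa [show p + (q - p) = q by ring] at this
  calc (f x/x)^q * (1/x) = (f x/x)^(q-p) * ((f x/x)^p * (1/x)) := by rw [hsplit]; ring
    _ ≤ C^(q-p) * ((f x/x)^p * (1/x)) := by
        apply mul_le_mul_of_nonneg_right
          (Real.rpow_le_rpow hfx (hbound x hx) (by linarith))
          (mul_nonneg (Real.rpow_nonneg hfx p) (one_div_nonneg.2 hx0.le))
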